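/- arXiv:2001.04457 — 2 statements merged into one kernel-verified Lean document; each statement's English description precedes it below -/
import Mathlib

section
/- For a coherent property map P (one satisfying P ≤ ρ(A, P) for all nonterminals A), and any nonterminals A, B, applying the one-step update ρ preserves coherence: ρ(A, P) is again coherent. -/
/-- Parsing expression grammars over terminals `VT` and nonterminals `Fin (n+1)`. -/
inductive PEG (VT : Type) (n : ℕ) : Type
  | eps : PEG VT n
  | any : PEG VT n
  | term : VT → PEG VT n
  | nt : Fin (n + 1) → PEG VT n
  | seq : PEG VT n → PEG VT n → PEG VT n
  | choice : PEG VT n → PEG VT n → PEG VT n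
  | star : PEG VT n → PEG VT n
  | notP : PEG VT n → PEG VT n

/-- A triple of booleans `(P_⊥, P_0, P_{>0})`: can-fail, can-succeed-without-consuming,
can-succeed-consuming. -/
abbrev Props := Bool × Bool × Bool

/-- A property map records known properties of each nonterminal. -/
abbrev PropMap (n : ℕ) := Fin (n + 1) → Props

/-- Componentwise implication order on property triples. -/
def Props.le (x y : Props) : Prop :=
  (x.1 = true → y.1 = true) ∧ (x.2.1 = true → y.2.1 = true) ∧ (x.2.2 = true → y.2.2 = true)

/-- Componentwise implication order on property maps. -/
def PropMap.le {n : ℕ} (P P' : PropMap n) : Prop := ∀ A, Props.le (P A) (P' A)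

/-- Structural computation of `(P_⊥, P_0, P_{>0})` for a PEG expression from known
properties of nonterminals. -/
def g {VT : Type} {n : ℕ} : PEG VT n → PropMap n → Props
  | .eps, _ => (false, true, false)
  | .any, _ => (true, false, true)
  | .term _, _ => (true, false, true)
  | .nt A, P => P A
  | .seq e1 e2, P =>
      let r1 := g e1 P
      let r2 := g e2 P
      (r1.1 || ((r1.2.1 || r1.2.2) && r2.1),
       r1.2.1 && r2.2.1,
       (r1.2.2 && (r2.2.1 || r2.2.2)) || (r1.2.1 && r2.2.2))
  | .choice e1 e2, P =>
      let r1 := g e1 P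
      let r2 := g e2 P
      (r1.1 && r2.1,
       r1.2.1 || (r1.1 && r2.2.1),
       r1.2.2 || (r1.1 && r2.2.2))
  | .star e, P =>
      let r := g e P
      (false, r.1, r.2.2)
  | .notP e, P =>
      let r := g e P
      (r.2.1 || r.2.2, r.1, false)

/-- One-step update `ρ(A, P)`: recompute the properties of the nonterminal `A`. -/
def rho {VT : Type} {n : ℕ} (Pexp : Fin (n + 1) → PEG VT n) (A : Fin (n + 1))
    (P : PropMap n) : PropMap n :=
  fun B => if B = A then g (Pexp A) P else P B

/-- A property map is coherent when it is not contradicted by a one-step update. -/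
def Coherent {VT : Type} {n : ℕ} (Pexp : Fin (n + 1) → PEG VT n) (P : PropMap n) : Prop :=
  ∀ A, PropMap.le P (rho Pexp A P)

/-- The sweep `r_A^P`: apply `ρ` to every nonterminal from `A` up to `n`. -/
def sweep {VT : Type} {n : ℕ} (Pexp : Fin (n + 1) → PEG VT n) (A : Fin (n + 1))
    (P : PropMap n) : PropMap n :=
  if h : (A : ℕ) < n then sweep Pexp ⟨(A : ℕ) + 1, by omega⟩ (rho Pexp A P)
  else rho Pexp A P
termination_by n - (A : ℕ)
decreasing_by (try simp); omega

theorem Props.le_trans {x y z : Props} (h1 : Props.le x y) (h2 : Props.le y z) :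
    Props.le x z :=
  ⟨fun h => h2.1 (h1.1 h), fun h => h2.2.1 (h1.2.1 h), fun h => h2.2.2 (h1.2.2 h)⟩

theorem g_mono {VT : Type} {n : ℕ} (e : PEG VT n) {P Q : PropMap n}
    (h : PropMap.le P Q) : Props.le (g e P) (g e Q) := by
  induction e with
  | eps => exact ⟨fun h => h, fun h => h, fun h => h⟩
  | any => exact ⟨fun h => h, fun h => h, fun h => h⟩
  | term _ => exact ⟨fun h => h, fun h => h, fun h => h⟩
  | nt A => exact h A
  | seq e1 e2 ih1 ih2 =>
    obtain ⟨a1, b1, c1⟩ := ih1; obtain ⟨a2, b2, c2⟩ := ih2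
    simp only [g, Props.le] at *
    refine ⟨?_, ?_, ?_⟩ <;> intro hh <;> simp_all <;> rcases hh with hh|hh <;> simp_all <;> tauto
  | choice e1 e2 ih1 ih2 =>
    obtain ⟨a1, b1, c1⟩ := ih1; obtain ⟨a2, b2, c2⟩ := ih2
    simp only [g, Props.le] at *
    refine ⟨?_, ?_, ?_⟩ <;> intro hh <;> simp_all <;> rcases hh with hh|hh <;> simp_all <;> tauto
  | star e ih =>
    obtain ⟨a, b, c⟩ := ih
    exact ⟨fun h => by simp [g] at h, fun h => a h, fun h => c h⟩
  | notP e ih =>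
    obtain ⟨a, b, c⟩ := ih
    refine ⟨?_, fun h => a h, fun h => by simp [g] at h⟩
    intro hh; simp only [g, Bool.or_eq_true] at *
    rcases hh with hh|hh
    · exact Or.inl (b hh)
    · exact Or.inr (c hh)

theorem P_le_rho {VT : Type} {n : ℕ} {Pexp : Fin (n + 1) → PEG VT n} {P : PropMap n}
    (hP : Coherent Pexp P) (A : Fin (n + 1)) : PropMap.le P (rho Pexp A P) := hP A

/-- the one-step update `ρ` preserves coherence. -/
theorem rho_preserves_coherent {VT : Type} {n : ℕ} (Pexp : Fin (n + 1) → PEG VT n)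
    (P : PropMap n) (hP : Coherent Pexp P) (A : Fin (n + 1)) :
    Coherent Pexp (rho Pexp A P) := by
  intro B C
  unfold rho
  by_cases hCB : C = B
  · subst hCB
    simp only [if_pos rfl]
    have hmono := g_mono (Pexp C) (hP A)
    by_cases hCA : C = A
    · subst hCA
      simp only [if_pos rfl]
      exact hmono
    · simp only [if_neg hCA]
      have h1 : Props.le (P C) (g (Pexp C) P) := by
        have := hP C C
        simpa [rho] using this
      exact Props.le_trans h1 hmono
  · simp only [if_neg hCB]
    exact ⟨fun h => h, fun h => h, fun h => h⟩
end

section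
/- The lexicographic order on 4-tuples (b − s_T, b − s, A, |G|) used as the termination measure of the reference PEG parser is well-founded, and each recursive call of the parser strictly decreases this measure: descending into a subexpression decreases |G|; expanding a nonterminal B < A with the same start decreases A; iterating a star on a well-formed grammar (so the body consumed at least one token) decreases b − s; and expanding a nonterminal B ≥ A after consuming at least one token since s_T (s > s_T, resetting s_T to s) decreases b − s_T. -/
/-- Number of nodes of a PEG expression. -/
def PEG.size {VT : Type} {n : ℕ} : PEG VT n → ℕ
  | .eps => 1
  | .any => 1
  | .term _ => 1
  | .nt _ => 1
  | .seq e1 e2 => e1.size + e2.size + 1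
  | .choice e1 e2 => e1.size + e2.size + 1
  | .star e => e.size + 1
  | .notP e => e.size + 1

/-- Immediate subexpression relation on PEG expressions. -/
inductive Subexpr {VT : Type} {n : ℕ} : PEG VT n → PEG VT n → Prop
  | seq_left (e1 e2 : PEG VT n) : Subexpr e1 (.seq e1 e2)
  | seq_right (e1 e2 : PEG VT n) : Subexpr e2 (.seq e1 e2)
  | choice_left (e1 e2 : PEG VT n) : Subexpr e1 (.choice e1 e2)
  | choice_right (e1 e2 : PEG VT n) : Subexpr e2 (.choice e1 e2)
  | star (e : PEG VT n) : Subexpr e (.star e)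
  | notP (e : PEG VT n) : Subexpr e (.notP e)

/-- Lexicographic order on 4-tuples of naturals. -/
abbrev Lex4 : ℕ × ℕ × ℕ × ℕ → ℕ × ℕ × ℕ × ℕ → Prop :=
  Prod.Lex (· < ·) (Prod.Lex (· < ·) (Prod.Lex (· < ·) (· < ·)))

/-- The termination measure `(b − s_T, b − s, A, |G|)` of the reference parser. -/
def mu {VT : Type} {n : ℕ} (b sT s : ℕ) (A : Fin (n + 1)) (G : PEG VT n) :
    ℕ × ℕ × ℕ × ℕ :=
  (b - sT, b - s, (A : ℕ), G.size)

/-- the lexicographic order on the 4-tuples `(b − s_T, b − s, A, |G|)`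
is well-founded, and each kind of recursive call of the reference parser strictly
decreases the measure: descending into a subexpression, expanding a smaller
nonterminal, iterating a star after consuming at least one token, and expanding a
nonterminal `B ≥ A` after consuming at least one token since `s_T` (resetting
`s_T` to `s`). -/
theorem measure_wf_and_decreasing {VT : Type} {n : ℕ}
    (Pexp : Fin (n + 1) → PEG VT n) (b : ℕ) :
    WellFounded (Lex4) ∧
    (∀ (sT s : ℕ) (A : Fin (n + 1)) (G G' : PEG VT n),
        Subexpr G' G → Lex4 (mu b sT s A G') (mu b sT s A G)) ∧
    (∀ (sT s : ℕ) (A B : Fin (n + 1)) (G : PEG VT n),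
        B < A → Lex4 (mu b sT s B (Pexp B)) (mu b sT s A G)) ∧
    (∀ (sT s s' : ℕ) (A A' : Fin (n + 1)) (G G' : PEG VT n),
        s < s' → s' ≤ b → Lex4 (mu b sT s' A' G') (mu b sT s A G)) ∧
    (∀ (sT s : ℕ) (A B : Fin (n + 1)) (G : PEG VT n),
        sT < s → s ≤ b → A ≤ B → Lex4 (mu b s s B (Pexp B)) (mu b sT s A G)) := by
  refine ⟨?_, ?_, ?_, ?_, ?_⟩
  · exact (Nat.lt_wfRel.wf).prod_lex ((Nat.lt_wfRel.wf).prod_lex ((Nat.lt_wfRel.wf).prod_lex Nat.lt_wfRel.wf))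
  · intro sT s A G G' h
    refine Prod.Lex.right _ (Prod.Lex.right _ (Prod.Lex.right _ ?_))
    cases h <;> simp [PEG.size] <;> omega
  · intro sT s A B G h
    exact Prod.Lex.right _ (Prod.Lex.right _ (Prod.Lex.left _ _ h))
  · intro sT s s' A A' G G' h1 h2
    exact Prod.Lex.right _ (Prod.Lex.left _ _ (by omega))
  · intro sT s A B G h1 h2 h3
    exact Prod.Lex.left _ _ (by omega)
end
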